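/- Let P be a nonsymmetric operad with multiplication π. The map ρ : P_{m+1} × P_n → P_{m+n}, ρ(f)φ := ι_f φ, defines an action of the Gerstenhaber–Voronov graded Lie algebra (P_{•+1}, [·,·]_GV) on the cup Lie algebra (P_•, [·,·]_π): ρ([f,g]_GV)(φ) = ρ(f)ρ(g)φ − (-1)^{mn}ρ(g)ρ(f)φ, and ρ(f)[φ,ψ]_π = [ρ(f)φ, ψ]_π + (-1)^{mk}[φ, ρ(f)ψ]_π for f ∈ P_{m+1}, g ∈ P_{n+1}, φ ∈ P_k, ψ ∈ P_l. -/

import Mathlib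

/-- A nonsymmetric operad (in "arity minus one" indexing: `Q n` is the space of
operations of arity `n + 1`, i.e. the space `P_{n+1}` of the paper), given by a
collection of `k`-modules with partial compositions
`∘ᵢ : P_{m+1} × P_{n+1} → P_{m+n+1}` (here `i : Fin (m+1)` is the 0-based
position), satisfying the sequential and parallel associativity axioms and
unit axioms.  The target degree is a free variable `p` constrained by
`m + n = p`, which avoids dependent-type casts in the axioms. -/
structure NSOperad (k : Type*) [Field k] (Q : ℕ → Type*)
    [∀ n, AddCommGroup (Q n)] [∀ n, Module k (Q n)] where
  comp : ∀ {m n p : ℕ}, m + n = p → Q m → Fin (m + 1) → Q n → Q p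
  comp_add_left : ∀ {m n p : ℕ} (h : m + n = p) (f f' : Q m) (i : Fin (m + 1)) (g : Q n),
    comp h (f + f') i g = comp h f i g + comp h f' i g
  comp_add_right : ∀ {m n p : ℕ} (h : m + n = p) (f : Q m) (i : Fin (m + 1)) (g g' : Q n),
    comp h f i (g + g') = comp h f i g + comp h f i g'
  comp_smul_left : ∀ {m n p : ℕ} (h : m + n = p) (a : k) (f : Q m) (i : Fin (m + 1)) (g : Q n),
    comp h (a • f) i g = a • comp h f i g
  comp_smul_right : ∀ {m n p : ℕ} (h : m + n = p) (a : k) (f : Q m) (i : Fin (m + 1)) (g : Q n),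
    comp h f i (a • g) = a • comp h f i g
  one : Q 0
  comp_one : ∀ {m : ℕ} (f : Q m) (i : Fin (m + 1)), comp (Nat.add_zero m) f i one = f
  one_comp : ∀ {m : ℕ} (f : Q m), comp (Nat.zero_add m) one 0 f = f
  assoc_seq : ∀ {m n l q r p : ℕ} (h0 : n + l = q) (h1 : m + q = p) (h2 : m + n = r)
    (h3 : r + l = p) (f : Q m) (g : Q n) (hh : Q l) (i : Fin (m + 1)) (j : Fin (n + 1)),
    comp h1 f i (comp h0 g j hh) =
      comp h3 (comp h2 f i g) ⟨(i : ℕ) + (j : ℕ), by have := i.isLt; have := j.isLt; omega⟩ hh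
  assoc_par : ∀ {m n l r s p : ℕ} (h2 : m + n = r) (h3 : r + l = p) (h4 : m + l = s)
    (h5 : s + n = p) (f : Q m) (g : Q n) (hh : Q l) (i j : Fin (m + 1)), (i : ℕ) < (j : ℕ) →
    comp h3 (comp h2 f i g) ⟨(j : ℕ) + n, by have := j.isLt; omega⟩ hh =
      comp h5 (comp h4 f j hh) ⟨(i : ℕ), by have := i.isLt; omega⟩ g

namespace NSOperad

variable {k : Type*} [Field k] {Q : ℕ → Type*}
  [∀ n, AddCommGroup (Q n)] [∀ n, Module k (Q n)]

/-- Transport along an equality of degrees. -/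
def tr {i j : ℕ} (h : i = j) (x : Q i) : Q j := h ▸ x

variable (O : NSOperad k Q)

/-- The contraction operator `ι_g f := Σᵢ (-1)^{(i-1)(n-1)} f ∘ᵢ g`
(for `f ∈ P_{m+1}`, `g ∈ P_{n+1}` in paper degrees). -/
def iota {m n : ℕ} (g : Q n) (f : Q m) : Q (m + n) :=
  ∑ i : Fin (m + 1), ((-1 : k) ^ ((i : ℕ) * n)) • O.comp rfl f i g

/-- `π ∈ P_2` is a multiplication if `π ∘₁ π = π ∘₂ π`. -/
def IsMult (π : Q 1) : Prop := O.comp rfl π 0 π = O.comp rfl π 1 π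

/-- The Gerstenhaber–Voronov bracket `[f,g]_GV = ι_f g − (-1)^{mn} ι_g f`. -/
def gv {m n : ℕ} (f : Q m) (g : Q n) : Q (m + n) :=
  tr (by omega : n + m = m + n) (O.iota f g) - ((-1 : k) ^ (m * n)) • O.iota g f

/-- The differential `δ_π f := −[π, f]_GV`. -/
def delta (π : Q 1) {n : ℕ} (f : Q n) : Q (n + 1) :=
  - tr (by omega : 1 + n = n + 1) (O.gv π f)

/-- The map `θ f := −ι_f π`. -/
def theta (π : Q 1) {n : ℕ} (f : Q n) : Q (n + 1) :=
  - tr (by omega : 1 + n = n + 1) (O.iota f π)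

/-- The map `D f := −ι_π f`. -/
def Dop (π : Q 1) {n : ℕ} (f : Q n) : Q (n + 1) := - O.iota π f

/-- The cup product `f ∪_π g := (π ∘₂ g) ∘₁ f`. -/
def cup (π : Q 1) {m n : ℕ} (f : Q m) (g : Q n) : Q (m + n + 1) :=
  O.comp (by omega : (1 + n) + m = m + n + 1) (O.comp rfl π 1 g) 0 f

/-- The cup bracket `[f,g]_π := f ∪_π g − (-1)^{(m+1)(n+1)} g ∪_π f`
(paper degrees `m+1`, `n+1`). -/
def cupBracket (π : Q 1) {m n : ℕ} (f : Q m) (g : Q n) : Q (m + n + 1) :=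
  O.cup π f g - ((-1 : k) ^ ((m + 1) * (n + 1))) •
    tr (by omega : n + m + 1 = m + n + 1) (O.cup π g f)

/-- The Frölicher–Nijenhuis bracket
`[f,g]_FN := [f,g]_π + (-1)^{m+1} ι_{δ_π f} g − (-1)^{(m+2)(n+1)} ι_{δ_π g} f`
(paper degrees `m+1`, `n+1`). -/
def fn (π : Q 1) {m n : ℕ} (f : Q m) (g : Q n) : Q (m + n + 1) :=
  O.cupBracket π f g
    + ((-1 : k) ^ (m + 1)) •
        tr (by omega : n + (m + 1) = m + n + 1) (O.iota (O.delta π f) g)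
    - ((-1 : k) ^ ((m + 2) * (n + 1))) •
        tr (by omega : m + (n + 1) = m + n + 1) (O.iota (O.delta π g) f)

/-- The derived bracket
`[f,g]_D := [f,g]_π + ι_{θ f} g − (-1)^{(m+1)(n+1)} ι_{θ g} f`. -/
def derived (π : Q 1) {m n : ℕ} (f : Q m) (g : Q n) : Q (m + n + 1) :=
  O.cupBracket π f g
    + tr (by omega : n + (m + 1) = m + n + 1) (O.iota (O.theta π f) g)
    - ((-1 : k) ^ ((m + 1) * (n + 1))) •
        tr (by omega : m + (n + 1) = m + n + 1) (O.iota (O.theta π g) f)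

/-- The deformed element `π_S := π ∘₁ S + π ∘₂ S − S ∘₁ π` for `S ∈ P_1`. -/
def piDef (π : Q 1) (S : Q 0) : Q 1 :=
  O.comp rfl π 0 S + O.comp rfl π 1 S - O.comp rfl S 0 π

/-- `S ∈ P_1` is a Nijenhuis element for the multiplication `π`:
`(π ∘₂ S) ∘₁ S = S ∘₁ (π ∘₁ S + π ∘₂ S − S ∘₁ π)`. -/
def IsNijenhuisFor (π : Q 1) (S : Q 0) : Prop :=
  O.comp rfl (O.comp rfl π 1 S) 0 S = O.comp rfl S 0 (O.piDef π S)

/-- Powers `N^j := N ∘₁ N^{j-1}`, `N^0 = 𝟙`. -/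
def Npow (N : Q 0) : ℕ → Q 0
  | 0 => O.one
  | (j + 1) => O.comp (rfl : (0 : ℕ) + 0 = 0) N 0 (Npow N j)

/-- `R ∈ P_1` is a Rota–Baxter element of weight `lam`:
`(π ∘₂ R) ∘₁ R = R ∘₁ (π ∘₁ R + π ∘₂ R + lam π)`. -/
def IsRB (π : Q 1) (lam : k) (R : Q 0) : Prop :=
  O.comp rfl (O.comp rfl π 1 R) 0 R =
    O.comp rfl R 0 (O.comp rfl π 0 R + O.comp rfl π 1 R + lam • π)

/-- `r ∈ P_1` is an averaging element:
`(π ∘₂ r) ∘₁ r = r ∘₁ (π ∘₁ r) = r ∘₁ (π ∘₂ r)`. -/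
def IsAvg (π : Q 1) (r : Q 0) : Prop :=
  O.comp rfl (O.comp rfl π 1 r) 0 r = O.comp rfl r 0 (O.comp rfl π 0 r) ∧
  O.comp rfl (O.comp rfl π 1 r) 0 r = O.comp rfl r 0 (O.comp rfl π 1 r)


end NSOperad

open NSOperad

set_option linter.unusedSectionVars false
set_option linter.dupNamespace false
namespace NSOperad
open Finset

variable {k : Type*} [Field k] {Q : ℕ → Type*}
  [∀ n, AddCommGroup (Q n)] [∀ n, Module k (Q n)] (O : NSOperad k Q)

@[simp] lemma tr_rfl {m : ℕ} (x : Q m) : tr (rfl : m = m) x = x := rfl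

lemma tr_tr {i j l : ℕ} (h : i = j) (h' : j = l) (x : Q i) :
    tr h' (tr h x) = tr (h.trans h') x := by subst h h'; rfl

lemma tr_add {i j : ℕ} (h : i = j) (x y : Q i) :
    tr h (x + y) = tr h x + tr h y := by subst h; rfl

lemma tr_sub {i j : ℕ} (h : i = j) (x y : Q i) :
    tr h (x - y) = tr h x - tr h y := by subst h; rfl

lemma tr_smul {i j : ℕ} (h : i = j) (a : k) (x : Q i) :
    tr h (a • x) = a • tr h x := by subst h; rfl

lemma tr_sum {i j : ℕ} {α : Type*} (h : i = j) (s : Finset α) (f : α → Q i) :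
    tr h (∑ x ∈ s, f x) = ∑ x ∈ s, tr h (f x) := by subst h; rfl

lemma comp_zero_left {m n p : ℕ} (h : m + n = p) (i : Fin (m+1)) (g : Q n) :
    O.comp h (0 : Q m) i g = 0 := by
  have := O.comp_add_left h 0 0 i g
  simpa using this.symm

lemma comp_zero_right {m n p : ℕ} (h : m + n = p) (f : Q m) (i : Fin (m+1)) :
    O.comp h f i (0 : Q n) = 0 := by
  have := O.comp_add_right h f i 0 0
  simpa using this.symm

/-- `comp` with an `ℕ` index, defaulting to `0` out of range. -/
def cN {m n p : ℕ} (h : m + n = p) (f : Q m) (i : ℕ) (g : Q n) : Q p :=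
  if hi : i < m + 1 then O.comp h f ⟨i, hi⟩ g else 0

lemma cN_eq {m n p : ℕ} (h : m + n = p) (f : Q m) (i : ℕ) (hi : i < m + 1) (g : Q n) :
    O.cN h f i g = O.comp h f ⟨i, hi⟩ g := dif_pos hi

lemma cN_add_left {m n p : ℕ} (h : m + n = p) (f f' : Q m) (i : ℕ) (g : Q n) :
    O.cN h (f + f') i g = O.cN h f i g + O.cN h f' i g := by
  unfold cN; split
  · exact O.comp_add_left ..
  · simp

lemma cN_add_right {m n p : ℕ} (h : m + n = p) (f : Q m) (i : ℕ) (g g' : Q n) :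
    O.cN h f i (g + g') = O.cN h f i g + O.cN h f i g' := by
  unfold cN; split
  · exact O.comp_add_right ..
  · simp

lemma cN_smul_left {m n p : ℕ} (h : m + n = p) (a : k) (f : Q m) (i : ℕ) (g : Q n) :
    O.cN h (a • f) i g = a • O.cN h f i g := by
  unfold cN; split
  · exact O.comp_smul_left ..
  · simp

lemma cN_smul_right {m n p : ℕ} (h : m + n = p) (a : k) (f : Q m) (i : ℕ) (g : Q n) :
    O.cN h f i (a • g) = a • O.cN h f i g := by
  unfold cN; split
  · exact O.comp_smul_right ..
  · simp

lemma cN_sum_left {m n p : ℕ} {α : Type*} (h : m + n = p) (s : Finset α)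
    (F : α → Q m) (i : ℕ) (g : Q n) :
    O.cN h (∑ x ∈ s, F x) i g = ∑ x ∈ s, O.cN h (F x) i g := by
  classical
  induction s using Finset.induction with
  | empty => unfold cN; split <;> simp [O.comp_zero_left]
  | insert _ _ hx ih => rw [Finset.sum_insert hx, O.cN_add_left, ih, Finset.sum_insert hx]

lemma cN_sum_right {m n p : ℕ} {α : Type*} (h : m + n = p) (f : Q m) (i : ℕ) (s : Finset α)
    (G : α → Q n) :
    O.cN h f i (∑ x ∈ s, G x) = ∑ x ∈ s, O.cN h f i (G x) := by
  classical
  induction s using Finset.induction with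
  | empty => unfold cN; split <;> simp [O.comp_zero_right]
  | insert _ _ hx ih => rw [Finset.sum_insert hx, O.cN_add_right, ih, Finset.sum_insert hx]

lemma cN_seq {m n l q r p : ℕ} (h0 : n + l = q) (h1 : m + q = p) (h2 : m + n = r)
    (h3 : r + l = p) (f : Q m) (g : Q n) (hh : Q l) {i j : ℕ} (hi : i ≤ m) (hj : j ≤ n) :
    O.cN h1 f i (O.cN h0 g j hh) = O.cN h3 (O.cN h2 f i g) (i + j) hh := by
  rw [O.cN_eq h0 g j (by omega), O.cN_eq h1 f i (by omega), O.cN_eq h2 f i (by omega),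
    O.cN_eq h3 _ (i+j) (by omega)]
  exact O.assoc_seq h0 h1 h2 h3 f g hh ⟨i, by omega⟩ ⟨j, by omega⟩

lemma cN_par {m n l r s p : ℕ} (h2 : m + n = r) (h3 : r + l = p) (h4 : m + l = s)
    (h5 : s + n = p) (f : Q m) (g : Q n) (hh : Q l) {i j : ℕ} (hj : j ≤ m) (hij : i < j) :
    O.cN h3 (O.cN h2 f i g) (j + n) hh = O.cN h5 (O.cN h4 f j hh) i g := by
  rw [O.cN_eq h2 f i (by omega), O.cN_eq h3 _ (j+n) (by omega), O.cN_eq h4 f j (by omega),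
    O.cN_eq h5 _ i (by omega)]
  exact O.assoc_par h2 h3 h4 h5 f g hh ⟨i, by omega⟩ ⟨j, by omega⟩ hij

lemma iota_expand {m n p : ℕ} (h : m + n = p) (g : Q n) (f : Q m) :
    tr h (O.iota g f) = ∑ i ∈ Finset.range (m+1), ((-1:k)^(i*n)) • O.cN h f i g := by
  subst h
  rw [tr_rfl, iota, ← Fin.sum_univ_eq_sum_range (fun i => ((-1:k)^(i*n)) • O.cN rfl f i g)]
  refine Fintype.sum_congr _ _ fun i => ?_
  rw [O.cN_eq rfl f i i.isLt]

lemma npow_neg_sq (x y : ℕ) : ((-1:k))^(x + 2*y) = (-1)^x := by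
  rw [pow_add, pow_mul, neg_one_sq, one_pow, mul_one]

lemma tri_comm {M : Type*} [AddCommMonoid M] (n : ℕ) (f : ℕ → ℕ → M) :
    ∑ i ∈ range n, ∑ j ∈ range i, f i j = ∑ j ∈ range n, ∑ i ∈ Ico (j+1) n, f i j := by
  induction n with
  | zero => simp
  | succ n ih =>
      rw [Finset.sum_range_succ, ih, Finset.sum_range_succ (fun j => ∑ i ∈ Ico (j+1) (n+1), f i j)]
      have h1 : ∀ j ∈ range n, ∑ i ∈ Ico (j+1) (n+1), f i j
          = (∑ i ∈ Ico (j+1) n, f i j) + f n j := by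
        intro j hj
        have := Finset.mem_range.mp hj
        rw [Finset.sum_Ico_succ_top (by omega : j+1 ≤ n)]
      rw [Finset.sum_congr rfl h1, Finset.sum_add_distrib]
      simp

lemma iota_sub_left {m n : ℕ} (g g' : Q n) (f : Q m) :
    O.iota (g - g') f = O.iota g f - O.iota g' f := by
  unfold iota
  rw [← Finset.sum_sub_distrib]
  refine Fintype.sum_congr _ _ fun i => ?_
  have h : O.comp rfl f i (g - g') = O.comp rfl f i g - O.comp rfl f i g' := by
    have h2 : O.comp rfl f i (g - g') + O.comp rfl f i g' = O.comp rfl f i g := by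
      rw [← O.comp_add_right]; congr 1; abel
    linear_combination (norm := abel) h2
  rw [h, smul_sub]

lemma iota_sub_right {m n : ℕ} (g : Q n) (f f' : Q m) :
    O.iota g (f - f') = O.iota g f - O.iota g f' := by
  unfold iota
  rw [← Finset.sum_sub_distrib]
  refine Fintype.sum_congr _ _ fun i => ?_
  have h : O.comp rfl (f - f') i g = O.comp rfl f i g - O.comp rfl f' i g := by
    have h2 : O.comp rfl (f - f') i g + O.comp rfl f' i g = O.comp rfl f i g := by
      rw [← O.comp_add_left]; congr 1; abel
    linear_combination (norm := abel) h2
  rw [h, smul_sub]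

lemma iota_smul_left {m n : ℕ} (a : k) (g : Q n) (f : Q m) :
    O.iota (a • g) f = a • O.iota g f := by
  unfold iota
  rw [Finset.smul_sum]
  refine Fintype.sum_congr _ _ fun i => ?_
  rw [O.comp_smul_right, smul_comm]

lemma iota_smul_right {m n : ℕ} (a : k) (g : Q n) (f : Q m) :
    O.iota g (a • f) = a • O.iota g f := by
  unfold iota
  rw [Finset.smul_sum]
  refine Fintype.sum_congr _ _ fun i => ?_
  rw [O.comp_smul_left, smul_comm]

lemma iota_tr_left {m n n' : ℕ} (h : n = n') (g : Q n) (f : Q m) :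
    O.iota (tr h g) f = tr (by rw [h]) (O.iota g f) := by subst h; rfl

lemma iota_tr_right {m m' n : ℕ} (h : m = m') (g : Q n) (f : Q m) :
    O.iota g (tr h f) = tr (by rw [h]) (O.iota g f) := by subst h; rfl

lemma iota_iota_expand {a b c p : ℕ} (f : Q a) (g : Q b) (φ : Q c) (h : (c+b)+a = p) :
    tr h (O.iota f (O.iota g φ)) =
      ∑ j ∈ range (c+b+1), ∑ i ∈ range (c+1),
        ((-1:k)^(j*a+i*b)) • O.cN h (O.cN rfl φ i g) j f := by
  rw [O.iota_expand h f (O.iota g φ)]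
  refine Finset.sum_congr rfl fun j hj => ?_
  have hX : O.iota g φ = ∑ i ∈ range (c+1), ((-1:k)^(i*b)) • O.cN rfl φ i g := by
    simpa using O.iota_expand rfl g φ
  rw [hX, O.cN_sum_left, Finset.smul_sum]
  refine Finset.sum_congr rfl fun i hi => ?_
  rw [O.cN_smul_left, smul_smul, ← pow_add]

lemma iota_nest_expand {a b c p : ℕ} (f : Q a) (g : Q b) (φ : Q c) (h : c+(b+a) = p)
    (h' : (c+b)+a = p) :
    tr h (O.iota (O.iota f g) φ) =
      ∑ i ∈ range (c+1), ∑ t ∈ range (b+1),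
        ((-1:k)^(i*(b+a)+t*a)) • O.cN h' (O.cN rfl φ i g) (i+t) f := by
  rw [O.iota_expand h (O.iota f g) φ]
  refine Finset.sum_congr rfl fun i hi => ?_
  have hY : O.iota f g = ∑ t ∈ range (b+1), ((-1:k)^(t*a)) • O.cN rfl g t f := by
    simpa using O.iota_expand rfl f g
  rw [hY, O.cN_sum_right, Finset.smul_sum]
  refine Finset.sum_congr rfl fun t ht => ?_
  rw [O.cN_smul_right, smul_smul, ← pow_add,
      O.cN_seq rfl h rfl h' φ g f (by simpa using Nat.lt_succ_iff.mp (Finset.mem_range.mp hi))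
        (by simpa using Nat.lt_succ_iff.mp (Finset.mem_range.mp ht))]


lemma full_sub_nest {M : Type*} [AddCommGroup M] (c B : ℕ) (F : ℕ → ℕ → M) (G : ℕ → ℕ → M)
    (hFG : ∀ i, i ≤ c → ∀ t, t ≤ B → G i t = F i (i+t)) :
    (∑ j ∈ range (c+B+1), ∑ i ∈ range (c+1), F i j)
      - (∑ i ∈ range (c+1), ∑ t ∈ range (B+1), G i t)
    = ∑ i ∈ range (c+1),
        ((∑ j ∈ range i, F i j) + ∑ j ∈ Ico (i+B+1) (c+B+1), F i j) := by
  rw [Finset.sum_comm, ← Finset.sum_sub_distrib]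
  refine Finset.sum_congr rfl fun i hi => ?_
  have hi' : i ≤ c := by have := Finset.mem_range.mp hi; omega
  have h1 : ∑ j ∈ range (c+B+1), F i j
      = (∑ j ∈ range i, F i j)
        + ((∑ j ∈ Ico i (i+B+1), F i j) + ∑ j ∈ Ico (i+B+1) (c+B+1), F i j) := by
    conv_lhs => rw [← Nat.Ico_zero_eq_range]
    rw [← Finset.sum_Ico_consecutive (fun j => F i j) (Nat.zero_le i)
          (show i ≤ c+B+1 by omega),
        ← Finset.sum_Ico_consecutive (fun j => F i j) (show i ≤ i+B+1 by omega)
          (show i+B+1 ≤ c+B+1 by omega),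
        Nat.Ico_zero_eq_range, add_assoc]
  have h2 : ∑ t ∈ range (B+1), G i t = ∑ j ∈ Ico i (i+B+1), F i j := by
    rw [Finset.sum_Ico_eq_sum_range, show i+B+1-i = B+1 from by omega]
    exact Finset.sum_congr rfl fun t ht => hFG i hi' t (by have := Finset.mem_range.mp ht; omega)
  rw [h1, h2]; abel

lemma key1 {a b c p : ℕ} (f : Q a) (g : Q b) (φ : Q c)
    (hX : (c+b)+a = p) (hY : (c+a)+b = p) :
    (∑ j ∈ range (c+b+1), ∑ i ∈ range (c+1),
        ((-1:k)^(j*a+i*b)) • O.cN hX (O.cN rfl φ i g) j f)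
    - (∑ i ∈ range (c+1), ∑ t ∈ range (b+1),
        ((-1:k)^(i*(b+a)+t*a)) • O.cN hX (O.cN rfl φ i g) (i+t) f)
    = ((-1:k)^(a*b)) •
      ((∑ j ∈ range (c+a+1), ∑ i ∈ range (c+1),
          ((-1:k)^(j*b+i*a)) • O.cN hY (O.cN rfl φ i f) j g)
      - (∑ i ∈ range (c+1), ∑ t ∈ range (a+1),
          ((-1:k)^(i*(a+b)+t*b)) • O.cN hY (O.cN rfl φ i f) (i+t) g)) := by
  rw [full_sub_nest c b (fun i j => ((-1:k)^(j*a+i*b)) • O.cN hX (O.cN rfl φ i g) j f)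
        (fun i t => ((-1:k)^(i*(b+a)+t*a)) • O.cN hX (O.cN rfl φ i g) (i+t) f)
        (fun i hi t ht => by beta_reduce; rw [show i*(b+a)+t*a = (i+t)*a+i*b from by ring]),
      full_sub_nest c a (fun i j => ((-1:k)^(j*b+i*a)) • O.cN hY (O.cN rfl φ i f) j g)
        (fun i t => ((-1:k)^(i*(a+b)+t*b)) • O.cN hY (O.cN rfl φ i f) (i+t) g)
        (fun i hi t ht => by beta_reduce; rw [show i*(a+b)+t*b = (i+t)*b+i*a from by ring]),
      Finset.sum_add_distrib, Finset.sum_add_distrib, smul_add]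
  have e1 : (∑ i ∈ range (c+1), ∑ j ∈ range i,
        ((-1:k)^(j*a+i*b)) • O.cN hX (O.cN rfl φ i g) j f)
      = ((-1:k)^(a*b)) • ∑ i ∈ range (c+1), ∑ j ∈ Ico (i+a+1) (c+a+1),
        ((-1:k)^(j*b+i*a)) • O.cN hY (O.cN rfl φ i f) j g := by
    refine (tri_comm (c+1)
      (fun i j => ((-1:k)^(j*a+i*b)) • O.cN hX (O.cN rfl φ i g) j f)).trans ?_
    rw [Finset.smul_sum]
    refine Finset.sum_congr rfl fun u hu => ?_
    have hu' : u ≤ c := by have := Finset.mem_range.mp hu; omega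
    rw [Finset.smul_sum, Finset.sum_Ico_eq_sum_range, Finset.sum_Ico_eq_sum_range,
        show c+1-(u+1) = c-u from by omega, show c+a+1-(u+a+1) = c-u from by omega]
    refine Finset.sum_congr rfl fun t ht => ?_
    have ht' : t < c-u := Finset.mem_range.mp ht
    rw [show u+a+1+t = (u+1+t)+a from by omega,
        O.cN_par rfl hY rfl hX φ f g (show u+1+t ≤ c by omega) (show u < u+1+t by omega),
        smul_smul, ← pow_add,
        show a*b+((u+1+t+a)*b+u*a) = (u*a+(u+1+t)*b) + 2*(a*b) from by ring,
        npow_neg_sq]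
  have e2 : (∑ i ∈ range (c+1), ∑ j ∈ Ico (i+b+1) (c+b+1),
        ((-1:k)^(j*a+i*b)) • O.cN hX (O.cN rfl φ i g) j f)
      = ((-1:k)^(a*b)) • ∑ i ∈ range (c+1), ∑ j ∈ range i,
        ((-1:k)^(j*b+i*a)) • O.cN hY (O.cN rfl φ i f) j g := by
    rw [tri_comm (c+1)
      (fun i j => ((-1:k)^(j*b+i*a)) • O.cN hY (O.cN rfl φ i f) j g)]
    rw [Finset.smul_sum]
    refine Finset.sum_congr rfl fun u hu => ?_
    have hu' : u ≤ c := by have := Finset.mem_range.mp hu; omega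
    rw [Finset.smul_sum, Finset.sum_Ico_eq_sum_range, Finset.sum_Ico_eq_sum_range,
        show c+b+1-(u+b+1) = c-u from by omega, show c+1-(u+1) = c-u from by omega]
    refine Finset.sum_congr rfl fun t ht => ?_
    have ht' : t < c-u := Finset.mem_range.mp ht
    rw [show u+b+1+t = (u+1+t)+b from by omega,
        O.cN_par rfl hX rfl hY φ g f (show u+1+t ≤ c by omega) (show u < u+1+t by omega),
        smul_smul, ← pow_add,
        show a*b+(u*b+(u+1+t)*a) = ((u+1+t)+b)*a+u*b from by ring]
  rw [e1, e2, add_comm]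


lemma gv_iota_eq {a b c p : ℕ} (f : Q a) (g : Q b) (φ : Q c)
    (h1 : c + (a+b) = p) (h2 : (c+b)+a = p) (h3 : (c+a)+b = p) :
    tr h1 (O.iota (O.gv f g) φ) =
      tr h2 (O.iota f (O.iota g φ)) - ((-1:k)^(a*b)) • tr h3 (O.iota g (O.iota f φ)) := by
  unfold gv
  rw [O.iota_sub_left, O.iota_smul_left, O.iota_tr_left, tr_sub, tr_smul, tr_tr]
  rw [O.iota_nest_expand f g φ _ h2]
  rw [O.iota_nest_expand g f φ h1 h3]
  rw [O.iota_iota_expand f g φ h2, O.iota_iota_expand g f φ h3]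
  have h' := O.key1 f g φ h2 h3
  rw [smul_sub] at h'
  exact (sub_eq_sub_iff_sub_eq_sub.mp h').symm


lemma tr_comp {m n p p' : ℕ} (h : m+n=p) (h' : p = p') (f : Q m) (i : Fin (m+1)) (g : Q n) :
    tr h' (O.comp h f i g) = O.comp (h.trans h') f i g := by subst h'; rfl

lemma cup_eq {c d p : ℕ} (π : Q 1) (φ : Q c) (ψ : Q d) (h : c + d + 1 = p) :
    tr h (O.cup π φ ψ) =
      O.cN (show (1+d)+c = p by omega) (O.cN rfl π 1 ψ) 0 φ := by
  unfold cup
  rw [O.tr_comp, O.cN_eq _ _ 0 (by omega), O.cN_eq rfl π 1 (by omega)]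
  rfl

lemma iota_cup {a c d p : ℕ} (π : Q 1) (f : Q a) (φ : Q c) (ψ : Q d)
    (h : (c+d+1)+a = p) (h1 : (c+a)+d+1 = p) (h2 : c+(d+a)+1 = p) :
    tr h (O.iota f (O.cup π φ ψ)) =
      tr h1 (O.cup π (O.iota f φ) ψ)
      + ((-1:k)^((c+1)*a)) • tr h2 (O.cup π φ (O.iota f ψ)) := by
  rw [O.iota_expand h f (O.cup π φ ψ)]
  have hcup : O.cup π φ ψ
      = O.cN (show (1+d)+c = c+d+1 by omega) (O.cN rfl π 1 ψ) 0 φ := by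
    simpa using O.cup_eq π φ ψ rfl
  rw [← Finset.sum_range_add_sum_Ico
        (fun j => ((-1:k)^(j*a)) • O.cN h (O.cup π φ ψ) j f)
        (show c+1 ≤ (c+d+1)+1 by omega)]
  congr 1
  · -- φ-part
    rw [O.cup_eq π (O.iota f φ) ψ h1]
    have hiφ : O.iota f φ = ∑ j ∈ range (c+1), ((-1:k)^(j*a)) • O.cN rfl φ j f := by
      simpa using O.iota_expand rfl f φ
    rw [hiφ, O.cN_sum_right]
    refine Finset.sum_congr rfl fun j hj => ?_
    have hj' : j ≤ c := by have := Finset.mem_range.mp hj; omega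
    rw [O.cN_smul_right, hcup,
        O.cN_seq rfl (show (1+d)+(c+a) = p by omega) (show (1+d)+c = c+d+1 by omega) h
          (O.cN rfl π 1 ψ) φ f (show (0:ℕ) ≤ 1+d by omega) hj',
        Nat.zero_add]
  · -- ψ-part
    rw [O.cup_eq π φ (O.iota f ψ) h2]
    have hiψ : O.iota f ψ = ∑ t ∈ range (d+1), ((-1:k)^(t*a)) • O.cN rfl ψ t f := by
      simpa using O.iota_expand rfl f ψ
    rw [hiψ, O.cN_sum_right, O.cN_sum_left, Finset.smul_sum,
        Finset.sum_Ico_eq_sum_range, show (c+d+1)+1-(c+1) = d+1 from by omega]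
    refine Finset.sum_congr rfl fun t ht => ?_
    have ht' : t ≤ d := by have := Finset.mem_range.mp ht; omega
    rw [O.cN_smul_right, O.cN_smul_left, hcup,
        show c+1+t = (1+t)+c from by omega,
        O.cN_par (show (1+d)+c = c+d+1 by omega) h (show (1+d)+a = 1+(d+a) by omega)
          (show (1+(d+a))+c = p by omega) (O.cN rfl π 1 ψ) φ f
          (show 1+t ≤ 1+d by omega) (show 0 < 1+t by omega),
        ← O.cN_seq rfl rfl rfl (show (1+d)+a = 1+(d+a) by omega) π ψ f
          (show (1:ℕ) ≤ 1 by omega) ht',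
        smul_smul, ← pow_add, show ((1+t)+c)*a = (c+1)*a + t*a from by ring]


lemma bracket_deriv {a c d p : ℕ} (π : Q 1) (f : Q a) (φ : Q c) (ψ : Q d)
    (H : (c+d+1)+a = p) (H1 : (c+a)+d+1 = p) (H2 : c+(d+a)+1 = p) :
    tr H (O.iota f (O.cupBracket π φ ψ)) =
      tr H1 (O.cupBracket π (O.iota f φ) ψ)
      + ((-1:k)^(a*(c+1))) • tr H2 (O.cupBracket π φ (O.iota f ψ)) := by
  unfold cupBracket
  rw [O.iota_sub_right, O.iota_smul_right, O.iota_tr_right, tr_sub, tr_smul, tr_tr,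
      tr_sub, tr_smul, tr_tr, tr_sub, tr_smul, tr_tr]
  rw [O.iota_cup π f φ ψ H H1 H2]
  rw [O.iota_cup π f ψ φ (show (d+c+1)+a = p by omega) (show (d+a)+c+1 = p by omega)
        (show d+(c+a)+1 = p by omega)]
  rw [smul_add, smul_sub, smul_smul, smul_smul, ← pow_add, ← pow_add]
  rw [show (c+1)*(d+1) + (d+1)*a = (c+a+1)*(d+1) from by ring]
  rw [show a*(c+1) + (c+1)*(d+a+1) = (c+1)*(d+1) + 2*(a*(c+1)) from by ring, npow_neg_sq]
  rw [show (c+1)*a = a*(c+1) from by ring]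
  module

end NSOperad

open NSOperad

theorem gv_action_on_cup_lie_algebra {k : Type*} [Field k] {Q : ℕ → Type*}
    [∀ n, AddCommGroup (Q n)] [∀ n, Module k (Q n)] (O : NSOperad k Q)
    (π : Q 1) (hπ : O.IsMult π) :
    (∀ (a b c : ℕ) (f : Q a) (g : Q b) (φ : Q c),
      tr (by omega : c + (a + b) = a + b + c) (O.iota (O.gv f g) φ) =
        tr (by omega : c + b + a = a + b + c) (O.iota f (O.iota g φ)) -
          ((-1 : k) ^ (a * b)) •
            tr (by omega : c + a + b = a + b + c) (O.iota g (O.iota f φ))) ∧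
    (∀ (a c d : ℕ) (f : Q a) (φ : Q c) (ψ : Q d),
      tr (by omega : c + d + 1 + a = a + c + d + 1) (O.iota f (O.cupBracket π φ ψ)) =
        tr (by omega : c + a + d + 1 = a + c + d + 1) (O.cupBracket π (O.iota f φ) ψ) +
          ((-1 : k) ^ (a * (c + 1))) •
            tr (by omega : c + (d + a) + 1 = a + c + d + 1)
              (O.cupBracket π φ (O.iota f ψ))) := by
  refine ⟨fun a b c f g φ => ?_, fun a c d f φ ψ => ?_⟩
  · exact O.gv_iota_eq f g φ (by omega) (by omega) (by omega)
  · exact O.bracket_deriv π f φ ψ (by omega) (by omega) (by omega)
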